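/- Suppose each f_i is convex with L_i-Lipschitz gradient, L = max_i L_i, 0 < c < 1/(2L·λ_max(𝕃)) where λ_max(𝕃) is the largest eigenvalue of 𝕃, and there exists (x*, q*) with x* − r + c Uᵀ q* = 0 and U ∇f(x*) = 0. Then along any Mirror-EXTRA trajectory (x^k, q^k), the first-order optimality residuals decay at an o(1/k) rate: lim_{k→∞} k·‖U ∇f(x^{k+1})‖_F² = 0 and lim_{k→∞} k·‖x^{k+1} − r + c Uᵀ q^{k+1}‖_F² = 0. -/

import Mathlib

open Matrix Filter Topology

noncomputable section

/-- Squared Frobenius norm. -/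
def frobSq {m p : ℕ} (A : Matrix (Fin m) (Fin p) ℝ) : ℝ := ∑ i, ∑ j, (A i j) ^ 2

/-- Squared Euclidean norm of a vector. -/
def enormSq {p : ℕ} (u : Fin p → ℝ) : ℝ := ∑ j, (u j) ^ 2

/-- The matrix whose `i`-th row is `∇fᵢ(xᵢ)`, given the gradient maps `g i`. -/
def gradMat {n p : ℕ} (g : Fin n → (Fin p → ℝ) → (Fin p → ℝ))
    (x : Matrix (Fin n) (Fin p) ℝ) : Matrix (Fin n) (Fin p) ℝ :=
  Matrix.of fun i => g i (x i)


/-- Rayleigh-type bounds for a real symmetric matrix from eigenvalue bounds. -/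
lemma rayleigh_bounds {m : ℕ} (A : Matrix (Fin m) (Fin m) ℝ) (hA : A.IsHermitian)
    (μ : ℝ) (hnn : ∀ i, 0 ≤ hA.eigenvalues i) (hle : ∀ i, hA.eigenvalues i ≤ μ)
    (w : Fin m → ℝ) :
    (∑ i, A.mulVec w i * w i ≤ μ * ∑ i, w i * w i) ∧
    (∑ i, A.mulVec w i * A.mulVec w i ≤ μ ^ 2 * ∑ i, w i * w i) := by
  classical
  set b := hA.eigenvectorBasis with hb
  set lam := hA.eigenvalues with hlam
  set W : EuclideanSpace ℝ (Fin m) := (WithLp.equiv 2 (Fin m → ℝ)).symm w with hWdef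
  set T := Matrix.toEuclideanLin A with hT
  have hTb : ∀ j, T (b j) = lam j • b j := by
    intro j
    have h := hA.mulVec_eigenvectorBasis j
    have : T (b j) = (WithLp.equiv 2 (Fin m → ℝ)).symm (A *ᵥ (WithLp.equiv 2 (Fin m → ℝ)) (b j)) :=
      rfl
    rw [this]
    have e : (WithLp.equiv 2 (Fin m → ℝ)) (b j) = ⇑(b j) := rfl
    rw [e, h]
    rfl
  set c : Fin m → ℝ := fun i => b.repr W i with hc
  have hW : W = ∑ i, c i • b i := (b.sum_repr W).symm
  have hTW : T W = ∑ i, (lam i * c i) • b i := by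
    rw [hW, map_sum]
    refine Finset.sum_congr rfl fun i _ => ?_
    rw [T.map_smul, hTb i, smul_smul, mul_comm]
  have horto := b.orthonormal
  have h1 : (inner ℝ W W : ℝ) = ∑ i, c i * c i := by
    rw [hW]
    simpa using horto.inner_sum c c Finset.univ
  have h2 : (inner ℝ (T W) W : ℝ) = ∑ i, (lam i * c i) * c i := by
    rw [hTW]
    rw [hW]
    simpa using horto.inner_sum (fun i => lam i * c i) c Finset.univ
  have h3 : (inner ℝ (T W) (T W) : ℝ) = ∑ i, (lam i * c i) * (lam i * c i) := by
    rw [hTW]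
    simpa using horto.inner_sum (fun i => lam i * c i) (fun i => lam i * c i) Finset.univ
  have hiw : (inner ℝ W W : ℝ) = ∑ i, w i * w i := by
    rw [PiLp.inner_apply]
    rfl
  have hTWw : ∀ i, T W i = A.mulVec w i := fun i => rfl
  have hitw : (inner ℝ (T W) W : ℝ) = ∑ i, A.mulVec w i * w i := by
    rw [PiLp.inner_apply]
    exact Finset.sum_congr rfl fun i _ => by
      simp only [RCLike.inner_apply, conj_trivial]
      rw [mul_comm]
      rfl
  have hitt : (inner ℝ (T W) (T W) : ℝ) = ∑ i, A.mulVec w i * A.mulVec w i := by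
    rw [PiLp.inner_apply]
    rfl
  constructor
  · rw [← hitw, ← hiw, h2, h1, Finset.mul_sum]
    refine Finset.sum_le_sum fun i _ => ?_
    have := hnn i; have := hle i; nlinarith [sq_nonneg (c i)]
  · rw [← hitt, ← hiw, h3, h1, Finset.mul_sum]
    refine Finset.sum_le_sum fun i _ => ?_
    have h4 : lam i * lam i ≤ μ * μ :=
      mul_le_mul (hle i) (hle i) (hnn i) ((hnn i).trans (hle i))
    nlinarith [h4, mul_self_nonneg (c i)]

/-- Frobenius inner product. -/
def mip {m p : ℕ} (A B : Matrix (Fin m) (Fin p) ℝ) : ℝ := ∑ i, ∑ j, A i j * B i j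

lemma frobSq' {m p : ℕ} (A : Matrix (Fin m) (Fin p) ℝ) :
    (∑ i, ∑ j, (A i j)^2) = mip A A := by
  simp [mip, sq]

lemma mip_comm {m p : ℕ} (A B : Matrix (Fin m) (Fin p) ℝ) : mip A B = mip B A := by
  simp [mip, mul_comm]

lemma mip_nonneg_self {m p : ℕ} (A : Matrix (Fin m) (Fin p) ℝ) : 0 ≤ mip A A :=
  Finset.sum_nonneg fun i _ => Finset.sum_nonneg fun j _ => mul_self_nonneg _

lemma mip_add_right {m p : ℕ} (A B C : Matrix (Fin m) (Fin p) ℝ) :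
    mip A (B + C) = mip A B + mip A C := by
  simp [mip, Matrix.add_apply, mul_add, Finset.sum_add_distrib]

lemma mip_sub_right {m p : ℕ} (A B C : Matrix (Fin m) (Fin p) ℝ) :
    mip A (B - C) = mip A B - mip A C := by
  simp [mip, Matrix.sub_apply, mul_sub, Finset.sum_sub_distrib]

lemma mip_sub_left {m p : ℕ} (A B C : Matrix (Fin m) (Fin p) ℝ) :
    mip (A - B) C = mip A C - mip B C := by
  rw [mip_comm, mip_sub_right, mip_comm C A, mip_comm C B]

lemma mip_smul_right {m p : ℕ} (t : ℝ) (A B : Matrix (Fin m) (Fin p) ℝ) :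
    mip A (t • B) = t * mip A B := by
  simp only [mip, Matrix.smul_apply, smul_eq_mul, Finset.mul_sum]
  exact Finset.sum_congr rfl fun i _ => Finset.sum_congr rfl fun j _ => by ring

lemma sum3_comm {α β γ : Type*} [Fintype α] [Fintype β] [Fintype γ] (f : α → β → γ → ℝ) :
    ∑ i, ∑ j, ∑ l, f i j l = ∑ l, ∑ j, ∑ i, f i j l :=
  calc ∑ i, ∑ j, ∑ l, f i j l = ∑ j, ∑ i, ∑ l, f i j l := Finset.sum_comm
    _ = ∑ j, ∑ l, ∑ i, f i j l := Finset.sum_congr rfl fun j _ => Finset.sum_comm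
    _ = ∑ l, ∑ j, ∑ i, f i j l := Finset.sum_comm

lemma mip_adj {a b p : ℕ} (M : Matrix (Fin a) (Fin b) ℝ) (A : Matrix (Fin b) (Fin p) ℝ)
    (B : Matrix (Fin a) (Fin p) ℝ) : mip (M * A) B = mip A (Mᵀ * B) := by
  simp only [mip, Matrix.mul_apply, Matrix.transpose_apply, Finset.sum_mul, Finset.mul_sum]
  rw [sum3_comm]
  exact Finset.sum_congr rfl fun l _ => Finset.sum_congr rfl fun j _ =>
    Finset.sum_congr rfl fun i _ => by ring

lemma mip_add_left {m p : ℕ} (A B C : Matrix (Fin m) (Fin p) ℝ) :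
    mip (A + B) C = mip A C + mip B C := by
  rw [mip_comm, mip_add_right, mip_comm C A, mip_comm C B]

lemma frobSq_add {m p : ℕ} (A B : Matrix (Fin m) (Fin p) ℝ) :
    mip (A+B) (A+B) = mip A A + 2 * mip A B + mip B B := by
  rw [mip_add_left, mip_add_right, mip_add_right, mip_comm B A]; ring

lemma frobSq_sub {m p : ℕ} (A B : Matrix (Fin m) (Fin p) ℝ) :
    mip (A-B) (A-B) = mip A A - 2 * mip A B + mip B B := by
  rw [mip_sub_left, mip_sub_right, mip_sub_right, mip_comm B A]; ring

lemma mip_smul_left {m p : ℕ} (t : ℝ) (A B : Matrix (Fin m) (Fin p) ℝ) :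
    mip (t • A) B = t * mip A B := by
  rw [mip_comm, mip_smul_right, mip_comm]

lemma mip_neg_neg {m p : ℕ} (A : Matrix (Fin m) (Fin p) ℝ) : mip (-A) (-A) = mip A A := by
  simp [mip]

lemma mip_sub_le {m p : ℕ} (A B : Matrix (Fin m) (Fin p) ℝ) :
    mip (A - B) (A - B) ≤ 2 * mip A A + 2 * mip B B := by
  simp only [mip, Matrix.sub_apply, Finset.mul_sum, ← Finset.sum_add_distrib]
  refine Finset.sum_le_sum fun i _ => Finset.sum_le_sum fun j _ => ?_
  nlinarith [sq_nonneg (A i j + B i j)]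

lemma frobSq_mul_le {a b p : ℕ} (M : Matrix (Fin a) (Fin b) ℝ) (κ : ℝ)
    (h : ∀ w : Fin b → ℝ, ∑ i, M.mulVec w i * M.mulVec w i ≤ κ * ∑ i, w i * w i)
    (A : Matrix (Fin b) (Fin p) ℝ) : mip (M * A) (M * A) ≤ κ * mip A A := by
  have hL : mip (M * A) (M * A)
      = ∑ j, ∑ i, M.mulVec (fun l => A l j) i * M.mulVec (fun l => A l j) i := by
    simp only [mip, Matrix.mul_apply, Matrix.mulVec, dotProduct]
    exact Finset.sum_comm
  have hR : mip A A = ∑ j : Fin p, ∑ l, A l j * A l j := by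
    simp only [mip]; exact Finset.sum_comm
  rw [hL, hR, Finset.mul_sum]
  exact Finset.sum_le_sum fun j _ => h _

lemma dot_UtU {a b : ℕ} (U : Matrix (Fin a) (Fin b) ℝ) (w : Fin b → ℝ) :
    ∑ i, U.mulVec w i * U.mulVec w i = ∑ i, (Uᵀ * U).mulVec w i * w i := by
  simp only [Matrix.mulVec, dotProduct, Matrix.mul_apply, Matrix.transpose_apply,
    Finset.sum_mul, Finset.mul_sum]
  rw [sum3_comm, Finset.sum_comm]
  exact Finset.sum_congr rfl fun i _ => Finset.sum_congr rfl fun j _ =>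
    Finset.sum_congr rfl fun l _ => by ring

lemma key_step {n1 n2 p : ℕ} (U : Matrix (Fin n1) (Fin n2) ℝ) (c L lmax : ℝ)
    (hc : 0 < c) (hlm : 0 ≤ lmax)
    (spec : ∀ A : Matrix (Fin n2) (Fin p) ℝ, mip (U * A) (U * A) ≤ lmax * mip A A)
    (dg dg0 dx : Matrix (Fin n2) (Fin p) ℝ) (dq dq0 : Matrix (Fin n1) (Fin p) ℝ)
    (hx : dx = (-c) • (Uᵀ * dq) + c • ((Uᵀ * U) * (dg - dg0)))
    (hq : dq = dq0 + U * dg)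
    (coco : (1 / L) * mip dg dg ≤ mip dg dx) :
    ((c/2) * mip dq dq + (c*lmax) * mip dg dg) + (1/L - 2*c*lmax) * mip dg dg
      + (c/2) * mip (U*dg0) (U*dg0)
      ≤ (c/2) * mip dq0 dq0 + (c*lmax) * mip dg0 dg0 := by
  set D := U * dg with hD
  set D0 := U * dg0 with hD0
  have e1 : mip dg dx = -(c * mip D dq) + c * (mip D D - mip D D0) := by
    rw [hx, mip_add_right, mip_smul_right, mip_smul_right]
    have a1 : mip dg (Uᵀ * dq) = mip D dq := (mip_adj U dg dq).symm
    have a2 : mip dg ((Uᵀ * U) * (dg - dg0)) = mip D D - mip D D0 := by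
      rw [Matrix.mul_assoc, ← mip_adj, Matrix.mul_sub, mip_sub_right]
    rw [a1, a2]; ring
  have e2 : mip D dq = mip dq0 D + mip D D := by
    rw [hq, mip_add_right, mip_comm D dq0]
  have e3 : mip dq dq = mip dq0 dq0 + 2 * mip dq0 D + mip D D := by
    rw [hq]; exact frobSq_add dq0 D
  have e5 : mip (D - D0) (D - D0) = mip D D - 2 * mip D D0 + mip D0 D0 := frobSq_sub D D0
  have e8 : mip (D - D0) (D - D0) ≤ lmax * (2 * mip dg dg + 2 * mip dg0 dg0) := by
    have e6 : mip (D - D0) (D - D0) ≤ lmax * mip (dg - dg0) (dg - dg0) := by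
      have hDD : D - D0 = U * (dg - dg0) := (Matrix.mul_sub U dg dg0).symm
      rw [hDD]; exact spec _
    exact e6.trans (mul_le_mul_of_nonneg_left (mip_sub_le dg dg0) hlm)
  rw [e1, e2] at coco
  have A1 : (c/2) * mip dq dq = (c/2) * mip dq0 dq0 + c * mip dq0 D + (c/2) * mip D D := by
    rw [e3]; ring
  have A3 : (c/2) * mip (D - D0) (D - D0)
      = (c/2) * mip D D - c * mip D D0 + (c/2) * mip D0 D0 := by rw [e5]; ring
  have A4 : (c/2) * mip (D - D0) (D - D0)
      ≤ (c*lmax) * mip dg dg + (c*lmax) * mip dg0 dg0 :=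
    le_trans (mul_le_mul_of_nonneg_left e8 (by positivity)) (le_of_eq (by ring))
  have hco : (1/L) * mip dg dg ≤ -(c * mip dq0 D) - c * mip D D0 := by linarith [coco]
  linarith [A1, A3, A4, hco]

section BH

open Set

variable {E : Type*} [NormedAddCommGroup E] [InnerProductSpace ℝ E] [CompleteSpace E]

local notation "⟪" x ", " y "⟫" => @inner ℝ _ _ x y

lemma line_hasDerivAt (f : E → ℝ) (G : E → E) (hgrad : ∀ z, HasGradientAt f (G z) z)
    (x v : E) (t : ℝ) :
    HasDerivAt (fun s : ℝ => f (x + s • v)) ⟪G (x + t • v), v⟫ t := by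
  have hline : HasDerivAt (fun s : ℝ => x + s • v) v t := by
    simpa using ((hasDerivAt_id t).smul_const v).const_add x
  have hf := (hgrad (x + t • v)).hasFDerivAt
  have := hf.comp_hasDerivAt t hline
  simp [InnerProductSpace.toDual_apply_apply] at this
  exact this

lemma convex_first_order (f : E → ℝ) (G : E → E) (hgrad : ∀ z, HasGradientAt f (G z) z)
    (hconv : ConvexOn ℝ univ f) (x y : E) :
    f x + ⟪G x, y - x⟫ ≤ f y := by
  set φ : ℝ → ℝ := fun s => f (x + s • (y - x)) with hφ
  have hφconv : ConvexOn ℝ univ φ := by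
    have := hconv.comp_affineMap (AffineMap.lineMap x y : ℝ →ᵃ[ℝ] E)
    have he : ∀ s : ℝ, (AffineMap.lineMap x y : ℝ →ᵃ[ℝ] E) s = x + s • (y - x) := by
      intro s; rw [AffineMap.lineMap_apply]; simp [vsub_eq_sub, vadd_eq_add]; abel
    have : ConvexOn ℝ ((AffineMap.lineMap x y : ℝ →ᵃ[ℝ] E) ⁻¹' univ)
        (f ∘ (AffineMap.lineMap x y : ℝ →ᵃ[ℝ] E)) := this
    simp only [preimage_univ] at this
    convert this using 1
    funext s
    simp only [Function.comp_apply, hφ, he s]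
  have hder : HasDerivAt φ ⟪G x, y - x⟫ 0 := by
    simpa using line_hasDerivAt f G hgrad x (y - x) 0
  have hslope : ⟪G x, y - x⟫ ≤ slope φ 0 1 :=
    hφconv.le_slope_of_hasDerivWithinAt_Ioi (mem_univ _) (mem_univ _) one_pos
      (hder.hasDerivWithinAt)
  have : slope φ 0 1 = φ 1 - φ 0 := by simp [slope_def_field]
  rw [this] at hslope
  have h0 : φ 0 = f x := by simp [hφ]
  have h1 : φ 1 = f y := by simp [hφ]
  rw [h0, h1] at hslope
  linarith

lemma descent_lemma (f : E → ℝ) (G : E → E) (L : ℝ) (hL : 0 < L)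
    (hgrad : ∀ z, HasGradientAt f (G z) z)
    (hlip : ∀ u v, ‖G u - G v‖ ≤ L * ‖u - v‖) (x y : E) :
    f y ≤ f x + ⟪G x, y - x⟫ + L / 2 * ‖y - x‖ ^ 2 := by
  set v := y - x with hv
  set χ : ℝ → ℝ := fun t => f (x + t • v) - t * ⟪G x, v⟫ - t ^ 2 * (L / 2 * ‖v‖ ^ 2) with hχ
  have hχder : ∀ t : ℝ, HasDerivAt χ
      (⟪G (x + t • v), v⟫ - ⟪G x, v⟫ - 2 * t * (L / 2 * ‖v‖ ^ 2)) t := by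
    intro t
    have h1 := line_hasDerivAt f G hgrad x v t
    have h2 : HasDerivAt (fun t : ℝ => t * ⟪G x, v⟫) ⟪G x, v⟫ t := by
      simpa using (hasDerivAt_id t).mul_const ⟪G x, v⟫
    have h3 : HasDerivAt (fun t : ℝ => t ^ 2 * (L / 2 * ‖v‖ ^ 2))
        (2 * t * (L / 2 * ‖v‖ ^ 2)) t := by
      have := (hasDerivAt_pow 2 t).mul_const (L / 2 * ‖v‖ ^ 2)
      refine this.congr_deriv ?_
      ring
    exact (h1.sub h2).sub h3
  have hderiv_nonpos : ∀ t ∈ interior (Icc (0:ℝ) 1), deriv χ t ≤ 0 := by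
    intro t ht
    rw [interior_Icc, mem_Ioo] at ht
    rw [(hχder t).deriv]
    have hb : ⟪G (x + t • v) - G x, v⟫ ≤ L * t * ‖v‖ ^ 2 := by
      calc ⟪G (x + t • v) - G x, v⟫ ≤ ‖G (x + t • v) - G x‖ * ‖v‖ := real_inner_le_norm _ _
        _ ≤ (L * ‖(x + t • v) - x‖) * ‖v‖ := by
            apply mul_le_mul_of_nonneg_right (hlip _ _) (norm_nonneg _)
        _ = L * t * ‖v‖ ^ 2 := by
            simp only [add_sub_cancel_left, norm_smul, Real.norm_eq_abs,
              abs_of_pos ht.1]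
            ring
    have : ⟪G (x + t • v), v⟫ - ⟪G x, v⟫ = ⟪G (x + t • v) - G x, v⟫ := by
      rw [inner_sub_left]
    rw [this]
    nlinarith [hb]
  have hcont : ContinuousOn χ (Icc (0:ℝ) 1) :=
    (fun t _ => ((hχder t).differentiableAt.continuousAt.continuousWithinAt))
  have hanti : AntitoneOn χ (Icc (0:ℝ) 1) :=
    antitoneOn_of_deriv_nonpos (convex_Icc 0 1) hcont
      (fun t ht => (hχder t).differentiableAt.differentiableWithinAt) hderiv_nonpos
  have h01 : χ 1 ≤ χ 0 := hanti (by norm_num) (by norm_num) zero_le_one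
  have hχ0 : χ 0 = f x := by simp [hχ]
  have hχ1 : χ 1 = f y - ⟪G x, v⟫ - L / 2 * ‖v‖ ^ 2 := by
    simp [hχ, hv]
  rw [hχ0, hχ1] at h01
  linarith

lemma baillon_haddad (f : E → ℝ) (G : E → E) (L : ℝ) (hL : 0 < L)
    (hgrad : ∀ z, HasGradientAt f (G z) z)
    (hconv : ConvexOn ℝ univ f)
    (hlip : ∀ u v, ‖G u - G v‖ ≤ L * ‖u - v‖) (x y : E) :
    (1 / L) * ‖G x - G y‖ ^ 2 ≤ ⟪G x - G y, x - y⟫ := by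
  have key : ∀ a b : E, f a + ⟪G a, b - a⟫ + 1 / (2 * L) * ‖G b - G a‖ ^ 2 ≤ f b := by
    intro a b
    set z : E := b - (1 / L) • (G b - G a) with hz
    have h1 : f z ≤ f b + ⟪G b, z - b⟫ + L / 2 * ‖z - b‖ ^ 2 :=
      descent_lemma f G L hL hgrad hlip b z
    have h2 : f a + ⟪G a, z - a⟫ ≤ f z := convex_first_order f G hgrad hconv a z
    have hzb : z - b = -((1 / L) • (G b - G a)) := by rw [hz]; abel
    have hna : ‖z - b‖ ^ 2 = (1 / L) ^ 2 * ‖G b - G a‖ ^ 2 := by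
      rw [hzb, norm_neg, norm_smul, mul_pow, Real.norm_eq_abs,
        abs_of_pos (by positivity : (0:ℝ) < 1 / L)]
    have hGbz : ⟪G b, z - b⟫ = -(1 / L) * ⟪G b, G b - G a⟫ := by
      rw [hzb, inner_neg_right, real_inner_smul_right]; ring
    have hGaz : ⟪G a, z - a⟫ = ⟪G a, b - a⟫ - (1 / L) * ⟪G a, G b - G a⟫ := by
      have : z - a = (b - a) - (1 / L) • (G b - G a) := by rw [hz]; abel
      rw [this, inner_sub_right, real_inner_smul_right]
    have hinner : ⟪G b, G b - G a⟫ - ⟪G a, G b - G a⟫ = ‖G b - G a‖ ^ 2 := by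
      rw [← inner_sub_left, real_inner_self_eq_norm_sq]
    have hLL : L / 2 * ((1 / L) ^ 2 * ‖G b - G a‖ ^ 2) = 1 / (2 * L) * ‖G b - G a‖ ^ 2 := by
      field_simp
    rw [hGbz, hna, hLL] at h1
    rw [hGaz] at h2
    have hinner' : (1 / L) * ⟪G b, G b - G a⟫ - (1 / L) * ⟪G a, G b - G a⟫
        = (1 / L) * ‖G b - G a‖ ^ 2 := by
      rw [← mul_sub, hinner]
    have hL0 : L ≠ 0 := ne_of_gt hL
    have hhalf : (1 / L) * ‖G b - G a‖ ^ 2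
        = 1 / (2 * L) * ‖G b - G a‖ ^ 2 + 1 / (2 * L) * ‖G b - G a‖ ^ 2 := by
      field_simp
      ring
    linarith [h1, h2, hinner', hhalf]
  have k1 := key x y
  have k2 := key y x
  have hxy : ⟪G x, y - x⟫ + ⟪G y, x - y⟫ = -⟪G x - G y, x - y⟫ := by
    rw [inner_sub_left]
    have : (y - x : E) = -(x - y) := by abel
    rw [this, inner_neg_right]
    ring
  have hnn : ‖G y - G x‖ = ‖G x - G y‖ := by rw [← norm_neg]; congr 1; abel
  rw [hnn] at k1
  have h2L : 1 / (2 * L) * ‖G x - G y‖ ^ 2 + 1 / (2 * L) * ‖G x - G y‖ ^ 2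
      = (1 / L) * ‖G x - G y‖ ^ 2 := by field_simp; ring
  linarith [k1, k2, hxy, h2L]

end BH


/-- If a nonneg summable sequence is nonincreasing, then `k * a k → 0`. -/
lemma tendsto_nat_mul_of_summable_antitone (a : ℕ → ℝ) (ha0 : ∀ k, 0 ≤ a k)
    (hmono : ∀ k, a (k + 1) ≤ a k) (hsum : Summable a) :
    Tendsto (fun k : ℕ => (k : ℝ) * a k) atTop (𝓝 0) := by
  have hanti : Antitone a := antitone_nat_of_succ_le hmono
  rw [Metric.tendsto_atTop]
  intro ε hε
  have htail : Tendsto (fun m => ∑' k, a (k + m)) atTop (𝓝 0) :=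
    tendsto_sum_nat_add a
  obtain ⟨m, hm⟩ := (Metric.tendsto_atTop.mp htail (ε / 2) (by linarith))
  have hm' := hm m le_rfl
  rw [Real.dist_eq, sub_zero] at hm'
  have htail_lt : ∑' k, a (k + m) < ε / 2 := (le_abs_self _).trans_lt hm'
  have ha_lim : Tendsto a atTop (𝓝 0) := hsum.tendsto_atTop_zero
  obtain ⟨N1, hN1⟩ := Metric.tendsto_atTop.mp ha_lim (ε / (2 * ((m : ℝ) + 1))) (by positivity)
  refine ⟨max N1 (m + 1), fun k hk => ?_⟩
  have hkN1 : N1 ≤ k := le_trans (le_max_left _ _) hk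
  have hkm : m + 1 ≤ k := le_trans (le_max_right _ _) hk
  have hmk : m ≤ k := le_trans (Nat.le_succ m) hkm
  have hsum_tail : Summable (fun i => a (i + m)) := (summable_nat_add_iff m).mpr hsum
  -- (k - m) * a k ≤ tail sum
  have h1 : ((k : ℝ) - (m : ℝ)) * a k ≤ ∑ j ∈ Finset.Ico m k, a j := by
    have hcard : (Finset.Ico m k).card = k - m := Nat.card_Ico m k
    have h := Finset.card_nsmul_le_sum (Finset.Ico m k) a (a k)
      (fun j hj => hanti (le_of_lt (Finset.mem_Ico.mp hj).2))
    rw [hcard, nsmul_eq_mul] at h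
    have : ((k - m : ℕ) : ℝ) = (k : ℝ) - (m : ℝ) := by
      rw [Nat.cast_sub hmk]
    rw [this] at h
    exact h
  have h2 : ∑ j ∈ Finset.Ico m k, a j ≤ ∑' i, a (i + m) := by
    rw [Finset.sum_Ico_eq_sum_range]
    have he : ∀ i, a (m + i) = a (i + m) := fun i => by rw [add_comm]
    simp_rw [he]
    exact hsum_tail.sum_le_tsum (Finset.range (k - m)) (fun i _ => ha0 _)
  have hak : a k < ε / (2 * ((m : ℝ) + 1)) := by
    have := hN1 k hkN1
    rw [Real.dist_eq, sub_zero] at this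
    exact (le_abs_self _).trans_lt this
  have hak2 : 2 * ((m : ℝ) + 1) * a k < ε := by
    rw [lt_div_iff₀ (by positivity)] at hak
    nlinarith [hak]
  have hma : (m : ℝ) * a k < ε / 2 := by
    have h0 : 0 ≤ a k := ha0 k
    nlinarith [hak2, h0]
  rw [Real.dist_eq, sub_zero]
  have hnn : 0 ≤ (k : ℝ) * a k := mul_nonneg (Nat.cast_nonneg k) (ha0 k)
  rw [abs_of_nonneg hnn]
  have : (k : ℝ) * a k = ((k : ℝ) - m) * a k + (m : ℝ) * a k := by ring
  rw [this]
  have := h1.trans (h2.trans htail_lt.le)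
  linarith


lemma frobSq_eq {m p : ℕ} (A : Matrix (Fin m) (Fin p) ℝ) : frobSq A = mip A A := by
  simp [frobSq, mip, sq]

lemma traj_sub {n1 n2 p : ℕ} (U : Matrix (Fin n1) (Fin n2) ℝ) (c : ℝ)
    (x1 x2 rr G1a G1b G2a G2b : Matrix (Fin n2) (Fin p) ℝ)
    (q1 q2 : Matrix (Fin n1) (Fin p) ℝ)
    (h1 : x1 - rr + c • (Uᵀ * q1) - c • ((Uᵀ * U) * (G1a - G1b)) = 0)
    (h2 : x2 - rr + c • (Uᵀ * q2) - c • ((Uᵀ * U) * (G2a - G2b)) = 0) :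
    x1 - x2 = (-c) • (Uᵀ * (q1 - q2)) + c • ((Uᵀ * U) * ((G1a - G2a) - (G1b - G2b))) := by
  have habel : x1 - x2 - ((-c) • (Uᵀ * (q1 - q2))
        + c • ((Uᵀ * U) * ((G1a - G2a) - (G1b - G2b))))
      = (x1 - rr + c • (Uᵀ * q1) - c • ((Uᵀ * U) * (G1a - G1b)))
        - (x2 - rr + c • (Uᵀ * q2) - c • ((Uᵀ * U) * (G2a - G2b))) := by
    simp only [Matrix.mul_sub, smul_sub, neg_smul]
    abel
  rw [← sub_eq_zero, habel, h1, h2, sub_zero]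

set_option maxHeartbeats 1600000 in
/-- `o(1/k)` decay of the first-order optimality residuals of Mirror-EXTRA
(Theorem 5). -/
theorem stmt_16 (n p : ℕ) (hn : 2 ≤ n) (hp : 1 ≤ p)
    (U : Matrix (Fin (n - 1)) (Fin n) ℝ)
    (hU : ∀ v : Fin n → ℝ, U.mulVec v = 0 ↔ ∃ a : ℝ, v = fun _ => a)
    (r : Matrix (Fin n) (Fin p) ℝ)
    (f : Fin n → (Fin p → ℝ) → ℝ)
    (g : Fin n → (Fin p → ℝ) → (Fin p → ℝ))
    -- each `fᵢ` is differentiable with gradient `g i`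
    (hgrad : ∀ i (u : Fin p → ℝ),
      HasGradientAt (fun v : EuclideanSpace ℝ (Fin p) => f i ((WithLp.equiv 2 (Fin p → ℝ)) v))
        ((WithLp.equiv 2 (Fin p → ℝ)).symm (g i u))
        ((WithLp.equiv 2 (Fin p → ℝ)).symm u))
    -- each `fᵢ` is convex
    (hconv : ∀ i, ConvexOn ℝ Set.univ (f i))
    (Li : Fin n → ℝ) (hLpos : ∀ i, 0 < Li i)
    -- each `∇fᵢ` is `Lᵢ`-Lipschitz
    (hlip : ∀ i (u v : Fin p → ℝ), enormSq (g i u - g i v) ≤ (Li i) ^ 2 * enormSq (u - v))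
    -- `L = maxᵢ Lᵢ`
    (L : ℝ) (hL : IsGreatest (Set.range Li) L)
    -- `λ_max(𝕃)`: the largest eigenvalue of `𝕃 = UᵀU`
    (lmax : ℝ)
    (hlmax_eig : ∃ v : Fin n → ℝ, v ≠ 0 ∧ (Uᵀ * U).mulVec v = lmax • v)
    (hlmax_max : ∀ (ν : ℝ) (v : Fin n → ℝ), v ≠ 0 → (Uᵀ * U).mulVec v = ν • v → ν ≤ lmax)
    (c : ℝ) (hc0 : 0 < c) (hc1 : c < 1 / (2 * L * lmax))
    -- an optimal pair `(x*, q*)` exists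
    (hopt : ∃ (xs : Matrix (Fin n) (Fin p) ℝ) (qs : Matrix (Fin (n - 1)) (Fin p) ℝ),
      xs - r + c • (Uᵀ * qs) = 0 ∧ U * gradMat g xs = 0)
    -- a Mirror-EXTRA trajectory
    (x : ℕ → Matrix (Fin n) (Fin p) ℝ) (q : ℕ → Matrix (Fin (n - 1)) (Fin p) ℝ)
    (hrec1 : ∀ k : ℕ,
      x (k + 1) - r + c • (Uᵀ * q (k + 1))
        - c • ((Uᵀ * U) * (gradMat g (x (k + 1)) - gradMat g (x k))) = 0)
    (hrec2 : ∀ k : ℕ, q (k + 1) = q k + U * gradMat g (x (k + 1))) :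
    Tendsto (fun k : ℕ => (k : ℝ) * frobSq (U * gradMat g (x (k + 1)))) atTop (𝓝 0) ∧
    Tendsto (fun k : ℕ =>
      (k : ℝ) * frobSq (x (k + 1) - r + c • (Uᵀ * q (k + 1)))) atTop (𝓝 0) := by
  classical
  obtain ⟨xs, qs, hfix1, hfix2⟩ := hopt
  -- scalar positivity facts
  obtain ⟨⟨i0, hi0⟩, hub⟩ := hL
  have hLpos' : 0 < L := hi0 ▸ hLpos i0
  have hLle : ∀ i, Li i ≤ L := fun i => hub (Set.mem_range_self i)
  have h2Ll : 0 < 2 * L * lmax := by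
    by_contra hcon
    push_neg at hcon
    have : 1 / (2 * L * lmax) ≤ 0 := one_div_nonpos.mpr hcon
    linarith
  have hlmax_pos : 0 < lmax := by nlinarith
  have hcl : c * (2 * L * lmax) < 1 := (lt_div_iff₀ h2Ll).mp hc1
  have hβ : 0 < 1 / L - 2 * c * lmax := by
    rw [sub_pos, lt_div_iff₀ hLpos']
    nlinarith
  -- spectral bounds
  have hUH : Uᴴ = Uᵀ := Matrix.conjTranspose_eq_transpose_of_trivial U
  have hPSD : (Uᵀ * U).PosSemidef := by
    rw [← hUH]; exact Matrix.posSemidef_conjTranspose_mul_self U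
  have hH : (Uᵀ * U).IsHermitian := hPSD.1
  have hnn : ∀ i, 0 ≤ hH.eigenvalues i := hPSD.eigenvalues_nonneg
  have hle : ∀ i, hH.eigenvalues i ≤ lmax := by
    intro i
    refine hlmax_max _ _ ?_ (hH.mulVec_eigenvectorBasis i)
    intro hzero
    exact hH.eigenvectorBasis.orthonormal.ne_zero i (by simpa using congrArg (WithLp.toLp 2) hzero)
  have rb := fun w => rayleigh_bounds (Uᵀ * U) hH lmax hnn hle w
  have specU : ∀ A : Matrix (Fin n) (Fin p) ℝ, mip (U * A) (U * A) ≤ lmax * mip A A := by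
    intro A
    refine frobSq_mul_le U lmax (fun w => ?_) A
    rw [dot_UtU]; exact (rb w).1
  have specL : ∀ A : Matrix (Fin n) (Fin p) ℝ,
      mip ((Uᵀ * U) * A) ((Uᵀ * U) * A) ≤ lmax ^ 2 * mip A A :=
    fun A => frobSq_mul_le (Uᵀ * U) (lmax ^ 2) (fun w => (rb w).2) A
  -- cocoercivity (Baillon–Haddad), row-wise then matrix-wise
  have hsqE : ∀ z : EuclideanSpace ℝ (Fin p), ‖z‖ ^ 2 = ∑ j, (z j) ^ 2 := by
    intro z
    rw [EuclideanSpace.norm_eq, Real.sq_sqrt (by positivity)]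
    exact Finset.sum_congr rfl fun j _ => by rw [Real.norm_eq_abs, sq_abs]
  have cocoRow : ∀ i (u v : Fin p → ℝ),
      (1 / L) * (∑ j, (g i u j - g i v j) ^ 2)
        ≤ ∑ j, (g i u j - g i v j) * (u j - v j) := by
    intro i u v
    set eqv := WithLp.equiv 2 (Fin p → ℝ) with heqv
    set Gi : EuclideanSpace ℝ (Fin p) → EuclideanSpace ℝ (Fin p) :=
      fun w => eqv.symm (g i (eqv w)) with hGi
    set fi : EuclideanSpace ℝ (Fin p) → ℝ := fun w => f i (eqv w) with hfi
    have hgrad' : ∀ w, HasGradientAt fi (Gi w) w := by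
      intro w
      simpa using hgrad i (eqv w)
    have hconv' : ConvexOn ℝ Set.univ fi :=
      ⟨convex_univ, fun a _ b _ s t hs ht hst =>
        (hconv i).2 (Set.mem_univ _) (Set.mem_univ _) hs ht hst⟩
    have hnormsq : ∀ w1 w2 : EuclideanSpace ℝ (Fin p),
        ‖Gi w1 - Gi w2‖ ^ 2 = enormSq (g i (eqv w1) - g i (eqv w2)) := by
      intro w1 w2
      rw [hsqE, enormSq]
      exact Finset.sum_congr rfl fun j _ => rfl
    have hdistsq : ∀ w1 w2 : EuclideanSpace ℝ (Fin p),
        ‖w1 - w2‖ ^ 2 = enormSq (eqv w1 - eqv w2) := by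
      intro w1 w2
      rw [hsqE, enormSq]
      exact Finset.sum_congr rfl fun j _ => rfl
    have hlip' : ∀ w1 w2 : EuclideanSpace ℝ (Fin p), ‖Gi w1 - Gi w2‖ ≤ Li i * ‖w1 - w2‖ := by
      intro w1 w2
      have h2 : ‖Gi w1 - Gi w2‖ ^ 2 ≤ (Li i) ^ 2 * ‖w1 - w2‖ ^ 2 := by
        rw [hnormsq, hdistsq]
        exact hlip i (eqv w1) (eqv w2)
      calc ‖Gi w1 - Gi w2‖ = Real.sqrt (‖Gi w1 - Gi w2‖ ^ 2) :=
            (Real.sqrt_sq (norm_nonneg _)).symm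
        _ ≤ Real.sqrt ((Li i) ^ 2 * ‖w1 - w2‖ ^ 2) := Real.sqrt_le_sqrt h2
        _ = Li i * ‖w1 - w2‖ := by
            rw [← mul_pow, Real.sqrt_sq (mul_nonneg (hLpos i).le (norm_nonneg _))]
    have bh := baillon_haddad fi Gi (Li i) (hLpos i) hgrad' hconv' hlip'
      (eqv.symm u) (eqv.symm v)
    have hinner : (inner ℝ (Gi (eqv.symm u) - Gi (eqv.symm v))
        (eqv.symm u - eqv.symm v) : ℝ) = ∑ j, (g i u j - g i v j) * (u j - v j) := by
      rw [PiLp.inner_apply]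
      exact Finset.sum_congr rfl fun j _ => by
        simp only [RCLike.inner_apply, conj_trivial]
        rw [mul_comm]
        rfl
    have hnormu : ‖Gi (eqv.symm u) - Gi (eqv.symm v)‖ ^ 2
        = ∑ j, (g i u j - g i v j) ^ 2 := by
      rw [hsqE]
      exact Finset.sum_congr rfl fun j _ => rfl
    rw [hnormu, hinner] at bh
    have hmono : (1 / L) * (∑ j, (g i u j - g i v j) ^ 2)
        ≤ (1 / Li i) * (∑ j, (g i u j - g i v j) ^ 2) := by
      apply mul_le_mul_of_nonneg_right
      · exact one_div_le_one_div_of_le (hLpos i) (hLle i)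
      · exact Finset.sum_nonneg fun j _ => sq_nonneg _
    linarith
  have cocoM : ∀ X Y : Matrix (Fin n) (Fin p) ℝ,
      (1 / L) * mip (gradMat g X - gradMat g Y) (gradMat g X - gradMat g Y)
        ≤ mip (gradMat g X - gradMat g Y) (X - Y) := by
    intro X Y
    have h1 : mip (gradMat g X - gradMat g Y) (gradMat g X - gradMat g Y)
        = ∑ i, ∑ j, (g i (X i) j - g i (Y i) j) ^ 2 := by
      simp only [mip]
      exact Finset.sum_congr rfl fun i _ => Finset.sum_congr rfl fun j _ => by
        show (gradMat g X i j - gradMat g Y i j) * (gradMat g X i j - gradMat g Y i j) = _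
        rw [show gradMat g X i j = g i (X i) j from rfl,
          show gradMat g Y i j = g i (Y i) j from rfl]
        ring
    have h2 : mip (gradMat g X - gradMat g Y) (X - Y)
        = ∑ i, ∑ j, (g i (X i) j - g i (Y i) j) * (X i j - Y i j) := by
      simp only [mip]
      exact Finset.sum_congr rfl fun i _ => Finset.sum_congr rfl fun j _ => by
        show (gradMat g X i j - gradMat g Y i j) * (X i j - Y i j) = _
        rw [show gradMat g X i j = g i (X i) j from rfl,
          show gradMat g Y i j = g i (Y i) j from rfl]
    rw [h1, h2, Finset.mul_sum]
    exact Finset.sum_le_sum fun i _ => cocoRow i (X i) (Y i)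
  -- fixed-point "trajectory" equations
  have hfixrec1 : xs - r + c • (Uᵀ * qs)
      - c • ((Uᵀ * U) * (gradMat g xs - gradMat g xs)) = 0 := by
    rw [sub_self, Matrix.mul_zero, smul_zero, sub_zero]; exact hfix1
  -- the key one-step inequality against the fixed point
  have keyF : ∀ k : ℕ,
      ((c/2) * mip (q (k+1) - qs) (q (k+1) - qs)
        + (c*lmax) * mip (gradMat g (x (k+1)) - gradMat g xs) (gradMat g (x (k+1)) - gradMat g xs))
      + (1/L - 2*c*lmax) * mip (gradMat g (x (k+1)) - gradMat g xs) (gradMat g (x (k+1)) - gradMat g xs)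
      + (c/2) * mip (U * (gradMat g (x k) - gradMat g xs)) (U * (gradMat g (x k) - gradMat g xs))
      ≤ (c/2) * mip (q k - qs) (q k - qs)
        + (c*lmax) * mip (gradMat g (x k) - gradMat g xs) (gradMat g (x k) - gradMat g xs) := by
    intro k
    refine key_step U c L lmax hc0 hlmax_pos.le specU
      (gradMat g (x (k+1)) - gradMat g xs) (gradMat g (x k) - gradMat g xs)
      (x (k+1) - xs) (q (k+1) - qs) (q k - qs) ?_ ?_ (cocoM (x (k+1)) xs)
    · exact traj_sub U c (x (k+1)) xs r (gradMat g (x (k+1))) (gradMat g (x k))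
        (gradMat g xs) (gradMat g xs) (q (k+1)) qs (hrec1 k) hfixrec1
    · rw [Matrix.mul_sub, hfix2, sub_zero, hrec2 k]; abel
  -- summability of the dissipation terms
  have hWFnonneg : ∀ k : ℕ, 0 ≤ (c/2) * mip (q k - qs) (q k - qs)
      + (c*lmax) * mip (gradMat g (x k) - gradMat g xs) (gradMat g (x k) - gradMat g xs) :=
    fun k => add_nonneg (mul_nonneg (by positivity) (mip_nonneg_self _))
      (mul_nonneg (by positivity) (mip_nonneg_self _))
  have hSFnonneg : ∀ k : ℕ, 0 ≤ (1/L - 2*c*lmax)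
        * mip (gradMat g (x (k+1)) - gradMat g xs) (gradMat g (x (k+1)) - gradMat g xs)
      + (c/2) * mip (U * (gradMat g (x k) - gradMat g xs)) (U * (gradMat g (x k) - gradMat g xs)) :=
    fun k => add_nonneg (mul_nonneg hβ.le (mip_nonneg_self _))
      (mul_nonneg (by positivity) (mip_nonneg_self _))
  have hSFsum : Summable (fun k : ℕ => (1/L - 2*c*lmax)
        * mip (gradMat g (x (k+1)) - gradMat g xs) (gradMat g (x (k+1)) - gradMat g xs)
      + (c/2) * mip (U * (gradMat g (x k) - gradMat g xs)) (U * (gradMat g (x k) - gradMat g xs))) := by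
    apply summable_of_sum_range_le hSFnonneg
    intro K
    have htel := Finset.sum_range_sub' (fun k => (c/2) * mip (q k - qs) (q k - qs)
      + (c*lmax) * mip (gradMat g (x k) - gradMat g xs) (gradMat g (x k) - gradMat g xs)) K
    calc ∑ k ∈ Finset.range K, ((1/L - 2*c*lmax)
          * mip (gradMat g (x (k+1)) - gradMat g xs) (gradMat g (x (k+1)) - gradMat g xs)
        + (c/2) * mip (U * (gradMat g (x k) - gradMat g xs)) (U * (gradMat g (x k) - gradMat g xs)))
        ≤ ∑ k ∈ Finset.range K, (((c/2) * mip (q k - qs) (q k - qs)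
            + (c*lmax) * mip (gradMat g (x k) - gradMat g xs) (gradMat g (x k) - gradMat g xs))
          - ((c/2) * mip (q (k+1) - qs) (q (k+1) - qs)
            + (c*lmax) * mip (gradMat g (x (k+1)) - gradMat g xs) (gradMat g (x (k+1)) - gradMat g xs))) :=
          Finset.sum_le_sum fun k _ => by linarith [keyF k]
      _ = ((c/2) * mip (q 0 - qs) (q 0 - qs)
            + (c*lmax) * mip (gradMat g (x 0) - gradMat g xs) (gradMat g (x 0) - gradMat g xs))
          - ((c/2) * mip (q K - qs) (q K - qs)
            + (c*lmax) * mip (gradMat g (x K) - gradMat g xs) (gradMat g (x K) - gradMat g xs)) := htel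
      _ ≤ (c/2) * mip (q 0 - qs) (q 0 - qs)
            + (c*lmax) * mip (gradMat g (x 0) - gradMat g xs) (gradMat g (x 0) - gradMat g xs) := by
          linarith [hWFnonneg K]
  have hA1sum : Summable (fun k : ℕ =>
      mip (gradMat g (x (k+1)) - gradMat g xs) (gradMat g (x (k+1)) - gradMat g xs)) := by
    refine Summable.of_nonneg_of_le (fun k => mip_nonneg_self _) (fun k => ?_)
      (hSFsum.div_const (1/L - 2*c*lmax))
    rw [le_div_iff₀ hβ]
    have h0 : 0 ≤ (c/2) * mip (U * (gradMat g (x k) - gradMat g xs))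
        (U * (gradMat g (x k) - gradMat g xs)) :=
      mul_nonneg (by positivity) (mip_nonneg_self _)
    nlinarith [h0]
  have hAsum : Summable (fun k : ℕ =>
      mip (gradMat g (x k) - gradMat g xs) (gradMat g (x k) - gradMat g xs)) :=
    (summable_nat_add_iff 1).mp hA1sum
  have hUsum : Summable (fun k : ℕ =>
      mip (U * (gradMat g (x k) - gradMat g xs)) (U * (gradMat g (x k) - gradMat g xs))) := by
    refine Summable.of_nonneg_of_le (fun k => mip_nonneg_self _) (fun k => ?_)
      (hSFsum.div_const (c/2))
    rw [le_div_iff₀ (by positivity)]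
    have h0 : 0 ≤ (1/L - 2*c*lmax)
        * mip (gradMat g (x (k+1)) - gradMat g xs) (gradMat g (x (k+1)) - gradMat g xs) :=
      mul_nonneg hβ.le (mip_nonneg_self _)
    nlinarith [h0]
  -- the key one-step inequality for the shifted trajectory
  have keyS : ∀ k : ℕ,
      ((c/2) * mip (q (k+1) - q (k+1+1)) (q (k+1) - q (k+1+1))
        + (c*lmax) * mip (gradMat g (x (k+1)) - gradMat g (x (k+1+1)))
            (gradMat g (x (k+1)) - gradMat g (x (k+1+1))))
      + (1/L - 2*c*lmax) * mip (gradMat g (x (k+1)) - gradMat g (x (k+1+1)))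
          (gradMat g (x (k+1)) - gradMat g (x (k+1+1)))
      + (c/2) * mip (U * (gradMat g (x k) - gradMat g (x (k+1))))
          (U * (gradMat g (x k) - gradMat g (x (k+1))))
      ≤ (c/2) * mip (q k - q (k+1)) (q k - q (k+1))
        + (c*lmax) * mip (gradMat g (x k) - gradMat g (x (k+1)))
            (gradMat g (x k) - gradMat g (x (k+1))) := by
    intro k
    refine key_step U c L lmax hc0 hlmax_pos.le specU
      (gradMat g (x (k+1)) - gradMat g (x (k+1+1))) (gradMat g (x k) - gradMat g (x (k+1)))
      (x (k+1) - x (k+1+1)) (q (k+1) - q (k+1+1)) (q k - q (k+1)) ?_ ?_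
      (cocoM (x (k+1)) (x (k+1+1)))
    · exact traj_sub U c (x (k+1)) (x (k+1+1)) r (gradMat g (x (k+1))) (gradMat g (x k))
        (gradMat g (x (k+1+1))) (gradMat g (x (k+1))) (q (k+1)) (q (k+1+1))
        (hrec1 k) (hrec1 (k+1))
    · rw [Matrix.mul_sub, hrec2 (k+1), hrec2 k]; abel
  -- the shifted Lyapunov function
  set WS : ℕ → ℝ := fun k => (c/2) * mip (q k - q (k+1)) (q k - q (k+1))
    + (c*lmax) * mip (gradMat g (x k) - gradMat g (x (k+1)))
        (gradMat g (x k) - gradMat g (x (k+1))) with hWS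
  have hWSnonneg : ∀ k, 0 ≤ WS k := fun k =>
    add_nonneg (mul_nonneg (by positivity) (mip_nonneg_self _))
      (mul_nonneg (by positivity) (mip_nonneg_self _))
  have hWSanti : ∀ k, WS (k + 1) ≤ WS k := by
    intro k
    have h1 := keyS k
    have h2 : 0 ≤ (1/L - 2*c*lmax) * mip (gradMat g (x (k+1)) - gradMat g (x (k+1+1)))
        (gradMat g (x (k+1)) - gradMat g (x (k+1+1))) := mul_nonneg hβ.le (mip_nonneg_self _)
    have h3 : 0 ≤ (c/2) * mip (U * (gradMat g (x k) - gradMat g (x (k+1))))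
        (U * (gradMat g (x k) - gradMat g (x (k+1)))) :=
      mul_nonneg (by positivity) (mip_nonneg_self _)
    rw [hWS]
    simp only
    linarith [h1, h2, h3]
  -- identities for the shifted quantities
  have hq_eq : ∀ k : ℕ, q k - q (k+1) = -(U * gradMat g (x (k+1))) := by
    intro k; rw [hrec2 k]; abel
  have hUG : ∀ k : ℕ, U * (gradMat g (x (k+1)) - gradMat g xs) = U * gradMat g (x (k+1)) := by
    intro k; rw [Matrix.mul_sub, hfix2, sub_zero]
  have hmip_q : ∀ k : ℕ, mip (q k - q (k+1)) (q k - q (k+1))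
      = mip (U * (gradMat g (x (k+1)) - gradMat g xs))
          (U * (gradMat g (x (k+1)) - gradMat g xs)) := by
    intro k
    rw [hq_eq k, mip_neg_neg, hUG k]
  have hGdiff : ∀ k : ℕ, gradMat g (x k) - gradMat g (x (k+1))
      = (gradMat g (x k) - gradMat g xs) - (gradMat g (x (k+1)) - gradMat g xs) := by
    intro k; abel
  -- summability of WS
  have hWSsum : Summable WS := by
    have hBndsum : Summable (fun k : ℕ =>
        (c/2) * mip (U * (gradMat g (x (k+1)) - gradMat g xs))
            (U * (gradMat g (x (k+1)) - gradMat g xs))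
        + (c*lmax) * (2 * mip (gradMat g (x k) - gradMat g xs) (gradMat g (x k) - gradMat g xs)
          + 2 * mip (gradMat g (x (k+1)) - gradMat g xs) (gradMat g (x (k+1)) - gradMat g xs))) :=
      Summable.add (((summable_nat_add_iff 1).mpr hUsum).mul_left (c/2))
        (Summable.mul_left (c*lmax) ((hAsum.mul_left 2).add (hA1sum.mul_left 2)))
    refine Summable.of_nonneg_of_le hWSnonneg (fun k => ?_) hBndsum
    rw [hWS]
    simp only
    have e1 : mip (q k - q (k+1)) (q k - q (k+1))
        = mip (U * (gradMat g (x (k+1)) - gradMat g xs))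
            (U * (gradMat g (x (k+1)) - gradMat g xs)) := hmip_q k
    have e2 : mip (gradMat g (x k) - gradMat g (x (k+1)))
          (gradMat g (x k) - gradMat g (x (k+1)))
        ≤ 2 * mip (gradMat g (x k) - gradMat g xs) (gradMat g (x k) - gradMat g xs)
          + 2 * mip (gradMat g (x (k+1)) - gradMat g xs) (gradMat g (x (k+1)) - gradMat g xs) := by
      rw [hGdiff k]
      exact mip_sub_le _ _
    have e3 : (c*lmax) * mip (gradMat g (x k) - gradMat g (x (k+1)))
          (gradMat g (x k) - gradMat g (x (k+1)))
        ≤ (c*lmax) * (2 * mip (gradMat g (x k) - gradMat g xs) (gradMat g (x k) - gradMat g xs)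
          + 2 * mip (gradMat g (x (k+1)) - gradMat g xs) (gradMat g (x (k+1)) - gradMat g xs)) :=
      mul_le_mul_of_nonneg_left e2 (by positivity)
    have e1' : (c/2) * mip (q k - q (k+1)) (q k - q (k+1))
        = (c/2) * mip (U * (gradMat g (x (k+1)) - gradMat g xs))
            (U * (gradMat g (x (k+1)) - gradMat g xs)) := by rw [e1]
    linarith [e1', e3]
  -- o(1/k) for the Lyapunov function
  have hWS0 : Tendsto (fun k : ℕ => (k : ℝ) * WS k) atTop (𝓝 0) :=
    tendsto_nat_mul_of_summable_antitone WS hWSnonneg hWSanti hWSsum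
  constructor
  · -- first residual
    have hupper : Tendsto (fun k : ℕ => (2/c) * ((k : ℝ) * WS k)) atTop (𝓝 0) := by
      simpa using hWS0.const_mul (2/c)
    refine tendsto_of_tendsto_of_tendsto_of_le_of_le tendsto_const_nhds hupper
      (fun k => ?_) (fun k => ?_)
    · rw [frobSq_eq]
      exact mul_nonneg (Nat.cast_nonneg k) (mip_nonneg_self _)
    · have hfr : frobSq (U * gradMat g (x (k+1)))
          = mip (q k - q (k+1)) (q k - q (k+1)) := by
        rw [frobSq_eq, hq_eq k, mip_neg_neg]
      have hpart : (c/2) * mip (q k - q (k+1)) (q k - q (k+1)) ≤ WS k := by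
        rw [hWS]; simp only
        have := mul_nonneg (mul_nonneg hc0.le hlmax_pos.le)
          (mip_nonneg_self (gradMat g (x k) - gradMat g (x (k+1))))
        linarith
      have hle' : frobSq (U * gradMat g (x (k+1))) ≤ (2/c) * WS k := by
        rw [hfr]
        have hcc : (2/c) * ((c/2) * mip (q k - q (k+1)) (q k - q (k+1)))
            = mip (q k - q (k+1)) (q k - q (k+1)) := by
          field_simp
        have h2 := mul_le_mul_of_nonneg_left hpart (by positivity : (0:ℝ) ≤ 2/c)
        rw [hcc] at h2
        exact h2
      calc (k : ℝ) * frobSq (U * gradMat g (x (k+1)))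
          ≤ (k : ℝ) * ((2/c) * WS k) :=
            mul_le_mul_of_nonneg_left hle' (Nat.cast_nonneg k)
        _ = (2/c) * ((k : ℝ) * WS k) := by ring
  · -- second residual
    have hupper : Tendsto (fun k : ℕ => (c*lmax) * ((k : ℝ) * WS k)) atTop (𝓝 0) := by
      simpa using hWS0.const_mul (c*lmax)
    refine tendsto_of_tendsto_of_tendsto_of_le_of_le tendsto_const_nhds hupper
      (fun k => ?_) (fun k => ?_)
    · rw [frobSq_eq]
      exact mul_nonneg (Nat.cast_nonneg k) (mip_nonneg_self _)
    · have hres2 : x (k+1) - r + c • (Uᵀ * q (k+1))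
          = c • ((Uᵀ * U) * (gradMat g (x (k+1)) - gradMat g (x k))) := by
        rw [← sub_eq_zero]; exact hrec1 k
      have hneg : gradMat g (x (k+1)) - gradMat g (x k)
          = -(gradMat g (x k) - gradMat g (x (k+1))) := by abel
      have hfr : frobSq (x (k+1) - r + c • (Uᵀ * q (k+1)))
          = c^2 * mip ((Uᵀ * U) * (gradMat g (x (k+1)) - gradMat g (x k)))
              ((Uᵀ * U) * (gradMat g (x (k+1)) - gradMat g (x k))) := by
        rw [frobSq_eq, hres2, mip_smul_left, mip_smul_right]; ring
      have hsp := specL (gradMat g (x (k+1)) - gradMat g (x k))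
      have hsp2 : mip ((Uᵀ * U) * (gradMat g (x (k+1)) - gradMat g (x k)))
            ((Uᵀ * U) * (gradMat g (x (k+1)) - gradMat g (x k)))
          ≤ lmax^2 * mip (gradMat g (x k) - gradMat g (x (k+1)))
              (gradMat g (x k) - gradMat g (x (k+1))) := by
        have hmm : mip (gradMat g (x (k+1)) - gradMat g (x k))
              (gradMat g (x (k+1)) - gradMat g (x k))
            = mip (gradMat g (x k) - gradMat g (x (k+1)))
              (gradMat g (x k) - gradMat g (x (k+1))) := by
          rw [hneg, mip_neg_neg]
        rw [hmm] at hsp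
        exact hsp
      have hpart : (c*lmax) * mip (gradMat g (x k) - gradMat g (x (k+1)))
          (gradMat g (x k) - gradMat g (x (k+1))) ≤ WS k := by
        rw [hWS]; simp only
        have := mul_nonneg (by positivity : (0:ℝ) ≤ c/2)
          (mip_nonneg_self (q k - q (k+1)))
        linarith
      have hle' : frobSq (x (k+1) - r + c • (Uᵀ * q (k+1))) ≤ (c*lmax) * WS k := by
        rw [hfr]
        have h3 := mul_le_mul_of_nonneg_left hsp2 (by positivity : (0:ℝ) ≤ c^2)
        have h4 := mul_le_mul_of_nonneg_left hpart
          (mul_nonneg hc0.le hlmax_pos.le)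
        have h5 : c^2 * (lmax^2 * mip (gradMat g (x k) - gradMat g (x (k+1)))
              (gradMat g (x k) - gradMat g (x (k+1))))
            = (c*lmax) * ((c*lmax) * mip (gradMat g (x k) - gradMat g (x (k+1)))
              (gradMat g (x k) - gradMat g (x (k+1)))) := by ring
        linarith [h3, h4, h5]
      calc (k : ℝ) * frobSq (x (k+1) - r + c • (Uᵀ * q (k+1)))
          ≤ (k : ℝ) * ((c*lmax) * WS k) :=
            mul_le_mul_of_nonneg_left hle' (Nat.cast_nonneg k)
        _ = (c*lmax) * ((k : ℝ) * WS k) := by ring
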